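/- Let Φ be an irreducible positive recurrent DTMC and g a finite nonnegative function. If E_ℓ[ζ_ℓ(g)] < ∞ for some state ℓ, then E_i[ζ_j(g)] < ∞ for all states i, j. In particular, if π^T g < ∞ then E_i[ζ_j(g)] < ∞ for all i, j. -/

import Mathlib

open MeasureTheory Filter Topology

/-- First return time to state `j` along a discrete path (junk value `0` if no return). -/
noncomputable def hitTime (j : ℕ) (ω : ℕ → ℕ) : ℕ := sInf {k | 1 ≤ k ∧ ω k = j}

/-- Additive functional `ζ_j(g)(ω) = ∑_{k=0}^{τ_j-1} g(ω_k)`. -/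
noncomputable def addF (g : ℕ → ℝ) (j : ℕ) (ω : ℕ → ℕ) : ℝ :=
  ∑ k ∈ Finset.range (hitTime j ω), g (ω k)

/-- Matrix powers of a transition kernel on `ℕ`. -/
noncomputable def matPow (P : ℕ → ℕ → ℝ) : ℕ → ℕ → ℕ → ℝ
  | 0 => fun i k => if i = k then 1 else 0
  | n + 1 => fun i k => ∑' m, matPow P n i m * P m k

def MCStochastic (P : ℕ → ℕ → ℝ) : Prop :=
  (∀ i k, 0 ≤ P i k) ∧ ∀ i, HasSum (P i) 1

def MCIrreducible (P : ℕ → ℕ → ℝ) : Prop := ∀ i k, ∃ n, 0 < matPow P n i k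

/-- `μ i` is the law on path space of the Markov chain with kernel `P` started at `i`. -/
def MCChainLaw (P : ℕ → ℕ → ℝ) (μ : ℕ → Measure (ℕ → ℕ)) : Prop :=
  (∀ i, IsProbabilityMeasure (μ i)) ∧
  ∀ i n (s : ℕ → ℕ), s 0 = i →
    μ i {ω | ∀ k ≤ n, ω k = s k} =
      ENNReal.ofReal (∏ k ∈ Finset.range n, P (s k) (s (k + 1)))

/-- Sure return to every state, with finite mean return times. -/
def MCPositiveRecurrent (μ : ℕ → Measure (ℕ → ℕ)) : Prop :=
  ∀ i j, μ i {ω | ∃ k, 1 ≤ k ∧ ω k = j} = 1 ∧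
    Integrable (fun ω => (hitTime j ω : ℝ)) (μ j)

/-- `π` is an invariant probability vector for `P`. -/
def MCInvariant (P : ℕ → ℕ → ℝ) (π : ℕ → ℝ) : Prop :=
  (∀ i, 0 ≤ π i) ∧ HasSum π 1 ∧ ∀ k, HasSum (fun i => π i * P i k) (π k)


open MeasureTheory Filter Topology
open scoped ENNReal

namespace AFT

/-- edge weight -/
noncomputable def pE (P : ℕ → ℕ → ℝ) (a b : ℕ) : ℝ≥0∞ := ENNReal.ofReal (P a b)

/-- weight of a path (list of states) -/
noncomputable def wL (P : ℕ → ℕ → ℝ) : List ℕ → ℝ≥0∞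
  | [] => 1
  | [_] => 1
  | a :: b :: t => pE P a b * wL P (b :: t)

@[simp] lemma wL_nil (P) : wL P [] = 1 := rfl
@[simp] lemma wL_single (P) (a : ℕ) : wL P [a] = 1 := rfl
lemma wL_cons_cons (P) (a b : ℕ) (t : List ℕ) :
    wL P (a :: b :: t) = pE P a b * wL P (b :: t) := rfl

lemma wL_append (P) (b : ℕ) (u : List ℕ) :
    ∀ (t : List ℕ) (a : ℕ),
    wL P (a :: (t ++ b :: u)) = wL P (a :: t ++ [b]) * wL P (b :: u) := by
  intro t
  induction t with
  | nil => intro a; simp [wL_cons_cons]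
  | cons c t' ih =>
      intro a
      have : (a :: (c :: t') ++ [b]) = a :: (c :: (t' ++ [b])) := by simp
      simp only [List.cons_append, wL_cons_cons, ih c, List.append_assoc]
      ring

noncomputable def Gf (g : ℕ → ℝ) (m : ℕ) : ℝ≥0∞ := ENNReal.ofReal (g m)

/-- `A P g i j` = `E_i[ζ_j(g)]` expressed as a sum over taboo paths. -/
noncomputable def A (P : ℕ → ℕ → ℝ) (g : ℕ → ℝ) (i j : ℕ) : ℝ≥0∞ :=
  ∑' t : List ℕ, if j ∈ t then 0 else wL P (i :: t) * Gf g (t.getLastD i)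

lemma wL_eq_prod (P : ℕ → ℕ → ℝ) (hP : ∀ a b, 0 ≤ P a b) :
    ∀ (t : List ℕ) (a : ℕ), wL P (a :: t) =
      ENNReal.ofReal (∏ r ∈ Finset.range t.length,
        P ((a :: t).getD r 0) ((a :: t).getD (r+1) 0)) := by
  intro t
  induction t with
  | nil => intro a; simp
  | cons b t' ih =>
      intro a
      rw [wL_cons_cons, ih b]
      have hlen : (b :: t').length = t'.length + 1 := rfl
      rw [hlen, Finset.prod_range_succ']
      simp only [List.getD_cons_succ, List.getD_cons_zero]
      rw [ENNReal.ofReal_mul (Finset.prod_nonneg (fun r _ => hP _ _))]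
      rw [mul_comm]
      rfl

end AFT

-- appended after core
namespace AFT

/-- cylinder set determined by a (full) path -/
def Cyl (l : List ℕ) : Set (ℕ → ℕ) := {ω | ∀ r < l.length, ω r = l.getD r 0}

lemma measurableSet_cyl (l : List ℕ) : MeasurableSet (Cyl l) := by
  have : Cyl l = ⋂ r : ℕ, {ω : ℕ → ℕ | r < l.length → ω r = l.getD r 0} := by
    ext ω; simp [Cyl, Set.mem_iInter]
  rw [this]
  refine MeasurableSet.iInter (fun r => ?_)
  by_cases h : r < l.length
  · have : {ω : ℕ → ℕ | r < l.length → ω r = l.getD r 0}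
        = (fun ω : ℕ → ℕ => ω r) ⁻¹' {l.getD r 0} := by
      ext ω; simp [h]
    rw [this]
    exact (measurable_pi_apply r) (measurableSet_singleton _)
  · have : {ω : ℕ → ℕ | r < l.length → ω r = l.getD r 0} = Set.univ := by
      ext ω; simp [h]
    rw [this]; exact MeasurableSet.univ

lemma cylMeas {P : ℕ → ℕ → ℝ} {μ : ℕ → Measure (ℕ → ℕ)} (hP : ∀ a b, 0 ≤ P a b)
    (hchain : MCChainLaw P μ) (i : ℕ) (u : List ℕ) :
    μ i (Cyl (i :: u)) = wL P (i :: u) := by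
  have h := hchain.2 i u.length (fun r => (i :: u).getD r 0) (by simp)
  have hset : {ω : ℕ → ℕ | ∀ k ≤ u.length, ω k = (i :: u).getD k 0} = Cyl (i :: u) := by
    ext ω
    constructor
    · intro h r hr
      exact h r (by simpa using Nat.lt_succ_iff.mp hr)
    · intro h k hk
      exact h k (by simpa using Nat.lt_succ_of_le hk)
  rw [hset] at h
  rw [h, wL_eq_prod P hP]

lemma prefix_of_agree : ∀ (l₁ l₂ : List ℕ), l₁.length ≤ l₂.length →
    (∀ r < l₁.length, l₁.getD r 0 = l₂.getD r 0) → l₁ <+: l₂ := by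
  intro l₁
  induction l₁ with
  | nil => intro l₂ _ _; exact List.nil_prefix
  | cons a t ih =>
      intro l₂ hlen hag
      cases l₂ with
      | nil => simp at hlen
      | cons b t₂ =>
          rw [List.cons_prefix_cons]
          refine ⟨by simpa using hag 0 (by simp), ih t₂ (by simpa using hlen) ?_⟩
          intro r hr
          simpa using hag (r+1) (by simpa using Nat.succ_lt_succ hr)

lemma disjoint_cyl {l₁ l₂ : List ℕ} (h₁ : ¬ l₁ <+: l₂) (h₂ : ¬ l₂ <+: l₁) :
    Disjoint (Cyl l₁) (Cyl l₂) := by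
  rw [Set.disjoint_left]
  intro ω hω1 hω2
  rcases le_total l₁.length l₂.length with h | h
  · exact h₁ (prefix_of_agree l₁ l₂ h (fun r hr => by
      rw [← hω1 r hr, ← hω2 r (lt_of_lt_of_le hr h)]))
  · exact h₂ (prefix_of_agree l₂ l₁ h (fun r hr => by
      rw [← hω2 r hr, ← hω1 r (lt_of_lt_of_le hr h)]))

/-- Sum of weights of a prefix-free family of continuations is at most 1. -/
lemma prefixFree_sum_le_one {P : ℕ → ℕ → ℝ} {μ : ℕ → Measure (ℕ → ℕ)}
    (hP : ∀ a b, 0 ≤ P a b) (hchain : MCChainLaw P μ) (i : ℕ)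
    (Q : List ℕ → Prop) [DecidablePred Q]
    (hpf : ∀ u u', Q u → Q u' → u ≠ u' → ¬ u <+: u') :
    ∑' u : List ℕ, (if Q u then wL P (i :: u) else 0) ≤ 1 := by
  have key : ∀ u : List ℕ, (if Q u then wL P (i :: u) else 0)
      = μ i (if Q u then Cyl (i :: u) else ∅) := by
    intro u
    by_cases h : Q u <;> simp [h, cylMeas hP hchain]
  simp_rw [key]
  rw [← measure_iUnion]
  · have := hchain.1 i
    calc μ i (⋃ u : List ℕ, if Q u then Cyl (i :: u) else ∅) ≤ μ i Set.univ :=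
          measure_mono (Set.subset_univ _)
      _ = 1 := measure_univ
  · intro u u' huu
    simp only [Function.onFun]
    by_cases h : Q u
    · by_cases h' : Q u'
      · rw [if_pos h, if_pos h']
        refine disjoint_cyl ?_ ?_
        · intro hpre
          rw [List.cons_prefix_cons] at hpre
          exact hpf u u' h h' huu hpre.2
        · intro hpre
          rw [List.cons_prefix_cons] at hpre
          exact hpf u' u h' h (Ne.symm huu) hpre.2
      · rw [if_neg h']; exact disjoint_bot_right
    · rw [if_neg h]; exact disjoint_bot_left
  · intro u
    by_cases h : Q u <;> simp [h, measurableSet_cyl]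

end AFT

namespace AFT

/-- the canonical prefix list of a path -/
def pref (ω : ℕ → ℕ) (k : ℕ) : List ℕ := (List.range k).map (fun r => ω (r+1))

lemma pref_length (ω : ℕ → ℕ) (k : ℕ) : (pref ω k).length = k := by simp [pref]

lemma mem_cyl_iff (i : ℕ) (ω : ℕ → ℕ) (hω0 : ω 0 = i) (u : List ℕ) (k : ℕ)
    (hlen : u.length = k) : ω ∈ Cyl (i :: u) ↔ u = pref ω k := by
  constructor
  · intro h
    refine List.ext_getElem (by simp [hlen, pref_length]) (fun n h₁ h₂ => ?_)
    have hn : n < k := hlen ▸ h₁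
    have := h (n+1) (by simp [hlen]; omega)
    simp only [List.getD_cons_succ] at this
    rw [List.getD_eq_getElem u 0 h₁] at this
    simp [pref, ← this]
  · rintro rfl
    intro r hr
    simp only [List.length_cons, pref_length] at hr
    match r with
    | 0 => simpa using hω0
    | (n+1) =>
        have hn : n < k := by omega
        simp only [List.getD_cons_succ]
        rw [List.getD_eq_getElem _ 0 (by simp [pref_length]; omega)]
        simp [pref]

lemma pref_getLastD (ω : ℕ → ℕ) (i k : ℕ) (hω0 : ω 0 = i) :
    (pref ω k).getLastD i = ω k := by
  cases k with
  | zero => simpa [pref] using hω0.symm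
  | succ n =>
      have : pref ω (n+1) = (pref ω n) ++ [ω (n+1)] := by
        simp [pref, List.range_succ]
      rw [this, List.getLastD_concat]

lemma mem_pref_iff (ω : ℕ → ℕ) (k j : ℕ) :
    j ∈ pref ω k ↔ ∃ t, 1 ≤ t ∧ t ≤ k ∧ ω t = j := by
  simp only [pref, List.mem_map, List.mem_range]
  constructor
  · rintro ⟨r, hr, rfl⟩; exact ⟨r+1, by omega, by omega, rfl⟩
  · rintro ⟨t, ht1, htk, rfl⟩; exact ⟨t-1, by omega, by rw [Nat.sub_add_cancel ht1]⟩

/-- Main identity: the expected additive functional equals the taboo-path sum. -/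
lemma intA {P : ℕ → ℕ → ℝ} {μ : ℕ → Measure (ℕ → ℕ)} {g : ℕ → ℝ}
    (hP : ∀ a b, 0 ≤ P a b) (hchain : MCChainLaw P μ)
    (hret : ∀ i j, μ i {ω | ∃ k, 1 ≤ k ∧ ω k = j} = 1)
    (hgnn : ∀ m, 0 ≤ g m) (i j : ℕ) :
    ∫⁻ ω, ENNReal.ofReal (addF g j ω) ∂ μ i = A P g i j := by
  classical
  -- the a.e. good set
  set E : Set (ℕ → ℕ) := {ω | ω 0 = i} ∩ {ω | ∃ k, 1 ≤ k ∧ ω k = j} with hE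
  have hE1 : μ i {ω : ℕ → ℕ | ω 0 = i} = 1 := by
    have h := hchain.2 i 0 (fun _ => i) rfl
    have hset : {ω : ℕ → ℕ | ∀ k ≤ 0, ω k = i} = {ω : ℕ → ℕ | ω 0 = i} := by
      ext ω; constructor
      · intro h; exact h 0 le_rfl
      · intro h k hk; interval_cases k; exact h
    rw [hset] at h; simpa using h
  have hEae : ∀ᵐ ω ∂ (μ i), ω ∈ E := by
    have h2 := hret i j
    have := hchain.1 i
    rw [hE]
    refine Filter.Eventually.and ?_ ?_
    · rw [MeasureTheory.ae_iff_measure_eq]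
      · simpa using hE1
      · -- null measurable
        have hm : MeasurableSet {ω : ℕ → ℕ | ω 0 = i} := by
          have : {ω : ℕ → ℕ | ω 0 = i} = (fun ω : ℕ → ℕ => ω 0) ⁻¹' {i} := by
            ext ω; simp
          rw [this]; exact (measurable_pi_apply 0) (measurableSet_singleton _)
        exact hm.nullMeasurableSet
    · rw [MeasureTheory.ae_iff_measure_eq]
      · simpa using h2
      · refine (MeasurableSet.nullMeasurableSet ?_)
        have : {ω : ℕ → ℕ | ∃ k, 1 ≤ k ∧ ω k = j} = ⋃ k, ⋃ (_ : 1 ≤ k), (fun ω : ℕ → ℕ => ω k) ⁻¹' {j} := by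
          ext ω; simp [Set.mem_iUnion]
        rw [this]
        exact MeasurableSet.iUnion (fun k => MeasurableSet.iUnion (fun _ =>
          (measurable_pi_apply k) (measurableSet_singleton _)))
  -- the summand functions
  set F : ℕ → List ℕ → (ℕ → ℕ) → ℝ≥0∞ := fun k u =>
    (Cyl (i :: u)).indicator (fun _ => if u.length = k ∧ j ∉ u then Gf g (u.getLastD i) else 0)
    with hF
  have hFmeas : ∀ k u, Measurable (F k u) := by
    intro k u
    exact (measurable_const.indicator (measurableSet_cyl _))
  -- pointwise identity on E
  have hpt : ∀ ω ∈ E, ENNReal.ofReal (addF g j ω) = ∑' k : ℕ, ∑' u : List ℕ, F k u ω := by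
    rintro ω ⟨hω0, hωr⟩
    simp only [Set.mem_setOf_eq] at hω0 hωr
    set N := hitTime j ω with hN
    have hNmem : 1 ≤ N ∧ ω N = j := Nat.sInf_mem hωr
    have hNmin : ∀ m, m < N → ¬ (1 ≤ m ∧ ω m = j) := fun m hm => Nat.notMem_of_lt_sInf hm
    have inner : ∀ k : ℕ, (∑' u : List ℕ, F k u ω) = if k < N then Gf g (ω k) else 0 := by
      intro k
      have huniq : ∀ u : List ℕ, u ≠ pref ω k → F k u ω = 0 := by
        intro u hu
        rw [hF]
        simp only [Set.indicator_apply]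
        by_cases hc : ω ∈ Cyl (i :: u)
        · by_cases hlen : u.length = k
          · exact absurd ((mem_cyl_iff i ω hω0 u k hlen).mp hc) hu
          · simp [hc, hlen]
        · simp [hc]
      rw [tsum_eq_single (pref ω k) huniq]
      have hcyl : ω ∈ Cyl (i :: pref ω k) :=
        (mem_cyl_iff i ω hω0 (pref ω k) k (pref_length ω k)).mpr rfl
      rw [hF]
      simp only [Set.indicator_of_mem hcyl, pref_length, true_and]
      have hmem : (j ∉ pref ω k) ↔ k < N := by
        rw [mem_pref_iff]
        constructor
        · intro hno
          by_contra hk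
          push_neg at hk
          exact hno ⟨N, hNmem.1, hk, hNmem.2⟩
        · rintro hkN ⟨t, ht1, htk, htj⟩
          exact hNmin t (lt_of_le_of_lt htk hkN) ⟨ht1, htj⟩
      by_cases hkN : k < N
      · rw [if_pos (hmem.mpr hkN), pref_getLastD ω i k hω0, if_pos hkN]
      · rw [if_neg (fun hc => hkN (hmem.mp hc)), if_neg hkN]
    calc ENNReal.ofReal (addF g j ω)
        = ∑ k ∈ Finset.range N, ENNReal.ofReal (g (ω k)) := by
          rw [addF, ENNReal.ofReal_sum_of_nonneg (fun k _ => hgnn _)]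
      _ = ∑' k : ℕ, (if k < N then Gf g (ω k) else 0) := by
          rw [tsum_eq_sum (s := Finset.range N) (fun b hb => by
            rw [if_neg (by simpa using hb)])]
          exact Finset.sum_congr rfl (fun k hk => by
            rw [if_pos (Finset.mem_range.mp hk)]; rfl)
      _ = ∑' k : ℕ, ∑' u : List ℕ, F k u ω := by
          exact tsum_congr (fun k => (inner k).symm)
  -- integrate
  have := lintegral_congr_ae (μ := μ i)
    (f := fun ω => ENNReal.ofReal (addF g j ω))
    (g := fun ω => ∑' k : ℕ, ∑' u : List ℕ, F k u ω)
    (hEae.mono (fun ω hω => hpt ω hω))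
  rw [this]
  rw [lintegral_tsum (fun k => (Measurable.ennreal_tsum (fun u => hFmeas k u)).aemeasurable)]
  have hint : ∀ k, ∫⁻ ω, ∑' u : List ℕ, F k u ω ∂ μ i
      = ∑' u : List ℕ, (if u.length = k ∧ j ∉ u then Gf g (u.getLastD i) else 0) * wL P (i :: u) := by
    intro k
    rw [lintegral_tsum (fun u => (hFmeas k u).aemeasurable)]
    refine tsum_congr (fun u => ?_)
    rw [hF]
    rw [lintegral_indicator_const (measurableSet_cyl _)]
    rw [cylMeas hP hchain]
  simp_rw [hint]
  rw [ENNReal.tsum_comm]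
  rw [A]
  refine tsum_congr (fun u => ?_)
  rw [tsum_eq_single u.length (fun k hk => by
    rw [if_neg (fun hc => hk hc.1.symm), zero_mul])]
  by_cases hj : j ∈ u
  · rw [if_neg (fun hc : u.length = u.length ∧ j ∉ u => hc.2 hj), if_pos hj, zero_mul]
  · rw [if_pos ⟨rfl, hj⟩, if_neg hj, mul_comm]

end AFT

namespace AFT

lemma first_occ_inj (ℓ : ℕ) : ∀ (t₁ t₂ t₁' t₂' : List ℕ), ℓ ∉ t₁ → ℓ ∉ t₁' →
    t₁ ++ ℓ :: t₂ = t₁' ++ ℓ :: t₂' → t₁ = t₁' ∧ t₂ = t₂' := by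
  intro t₁
  induction t₁ with
  | nil =>
      intro t₂ t₁' t₂' _ h₁' heq
      cases t₁' with
      | nil => simpa using heq
      | cons a w =>
          simp only [List.nil_append, List.cons_append, List.cons.injEq] at heq
          exact absurd (heq.1 ▸ List.mem_cons_self) h₁'
  | cons a w ih =>
      intro t₂ t₁' t₂' h₁ h₁' heq
      cases t₁' with
      | nil =>
          simp only [List.cons_append, List.nil_append, List.cons.injEq] at heq
          exact absurd (heq.1 ▸ List.mem_cons_self) h₁
      | cons b w' =>
          simp only [List.cons_append, List.cons.injEq] at heq
          obtain ⟨rfl, heq2⟩ := heq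
          have := ih t₂ w' t₂' (fun h => h₁ (List.mem_cons_of_mem _ h))
            (fun h => h₁' (List.mem_cons_of_mem _ h)) heq2
          exact ⟨by rw [this.1], this.2⟩

/-- Splitting an ENNReal sum over lists at the first occurrence of `ℓ`. -/
lemma tsum_split_first_occ (ℓ : ℕ) (f : List ℕ → ℝ≥0∞) :
    ∑' t : List ℕ, f t =
      (∑' t : List ℕ, if ℓ ∈ t then 0 else f t) +
      ∑' p : List ℕ × List ℕ, (if ℓ ∈ p.1 then 0 else f (p.1 ++ ℓ :: p.2)) := by
  classical
  have hsplit : ∀ t, f t = (if ℓ ∈ t then 0 else f t) + (if ℓ ∈ t then f t else 0) := by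
    intro t; by_cases h : ℓ ∈ t <;> simp [h]
  calc ∑' t : List ℕ, f t
      = ∑' t : List ℕ, ((if ℓ ∈ t then 0 else f t) + (if ℓ ∈ t then f t else 0)) :=
        tsum_congr hsplit
    _ = (∑' t : List ℕ, if ℓ ∈ t then 0 else f t) +
        ∑' t : List ℕ, (if ℓ ∈ t then f t else 0) := ENNReal.tsum_add
    _ = (∑' t : List ℕ, if ℓ ∈ t then 0 else f t) +
        ∑' p : List ℕ × List ℕ, (if ℓ ∈ p.1 then 0 else f (p.1 ++ ℓ :: p.2)) := by
        congr 1
        have hinj : Function.Injective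
            (fun p : {p : List ℕ × List ℕ // ℓ ∉ p.1} => p.1.1 ++ ℓ :: p.1.2) := by
          rintro ⟨⟨a₁, a₂⟩, ha⟩ ⟨⟨b₁, b₂⟩, hb⟩ heq
          obtain ⟨rfl, rfl⟩ := first_occ_inj ℓ a₁ a₂ b₁ b₂ ha hb heq
          rfl
        have hsupp : Function.support (fun t : List ℕ => if ℓ ∈ t then f t else 0) ⊆
            Set.range (fun p : {p : List ℕ × List ℕ // ℓ ∉ p.1} => p.1.1 ++ ℓ :: p.1.2) := by
          intro t ht
          have hmem : ℓ ∈ t := by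
            by_contra h; simp [h] at ht
          obtain ⟨t₁, t₂, rfl, h₁⟩ : ∃ t₁ t₂, t = t₁ ++ ℓ :: t₂ ∧ ℓ ∉ t₁ := by
            obtain ⟨t₁, t₂, rfl⟩ := List.append_of_mem hmem
            -- take first occurrence
            clear ht hmem
            induction t₁ with
            | nil => exact ⟨[], t₂, rfl, by simp⟩
            | cons a w ih =>
                by_cases ha : ℓ = a
                · exact ⟨[], w ++ ℓ :: t₂, by simp [ha], by simp⟩
                · obtain ⟨s₁, s₂, hs, hℓ⟩ := ih
                  refine ⟨a :: s₁, s₂, by simp [hs], ?_⟩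
                  simp only [List.mem_cons, not_or]
                  exact ⟨ha, hℓ⟩
          exact ⟨⟨⟨t₁, t₂⟩, h₁⟩, rfl⟩
        rw [← Function.Injective.tsum_eq hinj hsupp]
        have : ∀ p : {p : List ℕ × List ℕ // ℓ ∉ p.1},
            (if ℓ ∈ (p.1.1 ++ ℓ :: p.1.2) then f (p.1.1 ++ ℓ :: p.1.2) else 0)
            = (fun q : List ℕ × List ℕ => if ℓ ∈ q.1 then 0 else f (q.1 ++ ℓ :: q.2)) p.1 := by
          rintro ⟨⟨a₁, a₂⟩, ha⟩
          simp [ha, List.mem_append]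
        rw [tsum_congr this]
        refine Eq.trans
          (tsum_subtype {p : List ℕ × List ℕ | ℓ ∉ p.1}
            (fun q => if ℓ ∈ q.1 then 0 else f (q.1 ++ ℓ :: q.2))) ?_
        refine tsum_congr (fun p => ?_)
        by_cases hp : ℓ ∈ p.1
        · simp [Set.indicator_apply, Set.mem_setOf_eq, hp]
        · simp [Set.indicator_apply, Set.mem_setOf_eq, hp]

/-- Reindexing sums over lists ending in a fixed element. -/
lemma tsum_concat_reindex (m : ℕ) (f : List ℕ → ℝ≥0∞)
    (hsupp : ∀ t, f t ≠ 0 → ∃ w, t = w ++ [m]) :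
    ∑' t : List ℕ, f t = ∑' w : List ℕ, f (w ++ [m]) := by
  have hinj : Function.Injective (fun w : List ℕ => w ++ [m]) :=
    fun a b h => List.append_cancel_right h
  refine (Function.Injective.tsum_eq hinj ?_).symm
  intro t ht
  obtain ⟨w, rfl⟩ := hsupp t ht
  exact ⟨w, rfl⟩

end AFT

namespace AFT

lemma wL_ne_top (P : ℕ → ℕ → ℝ) : ∀ l : List ℕ, wL P l ≠ ⊤ := by
  intro l
  induction l with
  | nil => simp
  | cons a t ih =>
      cases t with
      | nil => simp
      | cons b w =>
          rw [wL_cons_cons]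
          exact ENNReal.mul_ne_top ENNReal.ofReal_ne_top ih

lemma getLastD_cons' (b i : ℕ) (w : List ℕ) : (b :: w).getLastD i = w.getLastD b := by
  cases w <;> simp [List.getLastD]

lemma wL_concat (P : ℕ → ℕ → ℝ) : ∀ (t : List ℕ) (i m : ℕ),
    wL P (i :: (t ++ [m])) = wL P (i :: t) * pE P (t.getLastD i) m := by
  intro t
  induction t with
  | nil => intro i m; simp [wL_cons_cons, List.getLastD]
  | cons b w ih =>
      intro i m
      rw [List.cons_append, wL_cons_cons, ih b m, wL_cons_cons, getLastD_cons']
      ring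

lemma matPow_nonneg {P : ℕ → ℕ → ℝ} (hP : ∀ a b, 0 ≤ P a b) :
    ∀ n i k, 0 ≤ matPow P n i k := by
  intro n
  induction n with
  | zero => intro i k; simp only [matPow]; split <;> norm_num
  | succ n ih =>
      intro i k
      simp only [matPow]
      exact tsum_nonneg (fun m => mul_nonneg (ih i m) (hP m k))

lemma exists_pos_word {P : ℕ → ℕ → ℝ} (hP : ∀ a b, 0 ≤ P a b) :
    ∀ n i k, 0 < matPow P n i k →
      ∃ t : List ℕ, 0 < wL P (i :: t) ∧ t.getLastD i = k := by
  intro n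
  induction n with
  | zero =>
      intro i k h
      simp only [matPow] at h
      split at h
      · exact ⟨[], by simp, by simpa [List.getLastD]⟩
      · norm_num at h
  | succ n ih =>
      intro i k h
      simp only [matPow] at h
      have : ∃ m, 0 < matPow P n i m * P m k := by
        by_contra hc
        push_neg at hc
        have : ∀ m, matPow P n i m * P m k = 0 := fun m =>
          le_antisymm (hc m) (mul_nonneg (matPow_nonneg hP n i m) (hP m k))
        rw [tsum_congr this, tsum_zero] at h
        exact lt_irrefl 0 h
      obtain ⟨m, hm⟩ := this
      have h1 : 0 < matPow P n i m :=
        lt_of_le_of_ne (matPow_nonneg hP n i m) (fun hc => by rw [← hc] at hm; simp at hm)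
      have h2 : 0 < P m k := by
        rcases lt_or_eq_of_le (hP m k) with h | h
        · exact h
        · rw [← h] at hm; simp at hm
      obtain ⟨t, htw, htl⟩ := ih i m h1
      refine ⟨t ++ [k], ?_, by simp [List.getLastD_concat]⟩
      rw [wL_concat, htl]
      exact ENNReal.mul_pos (ne_of_gt htw) (by simp [pE, ENNReal.ofReal_pos, h2])

lemma exists_avoid_aux {P : ℕ → ℕ → ℝ} (i k : ℕ) (hik : i ≠ k) :
    ∀ n (t : List ℕ), t.length ≤ n → 0 < wL P (i :: t) → t.getLastD i = k →
      ∃ w, 0 < wL P (i :: (w ++ [k])) ∧ i ∉ w ∧ k ∉ w := by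
  intro n
  induction n with
  | zero =>
      intro t ht hw hl
      have : t = [] := List.length_eq_zero_iff.mp (Nat.le_zero.mp ht)
      subst this
      simp only [List.getLastD] at hl
      exact absurd hl hik
  | succ n ih =>
      intro t ht hw hl
      have htne : t ≠ [] := by
        rintro rfl
        simp only [List.getLastD] at hl
        exact hik hl
      obtain ⟨w, rfl⟩ : ∃ w, t = w ++ [k] := by
        refine ⟨t.dropLast, ?_⟩
        conv_lhs => rw [← List.dropLast_append_getLast htne]
        congr 1
        rw [← hl]
        rw [List.getLastD_eq_getLast? , List.getLast?_eq_getLast htne]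
        rfl
      by_cases hkw : k ∈ w
      · obtain ⟨w₁, w₂, rfl⟩ := List.append_of_mem hkw
        rw [List.append_assoc, List.cons_append] at hw
        rw [wL_append P k (w₂ ++ [k]) w₁ i] at hw
        have h1 : 0 < wL P (i :: w₁ ++ [k]) := by
          rcases ENNReal.mul_pos_iff.mp hw with ⟨h, _⟩
          exact h
        have hlen : (w₁ ++ [k]).length ≤ n := by
          simp only [List.length_append, List.length_cons, List.length_singleton] at ht ⊢
          omega
        exact ih (w₁ ++ [k]) hlen (by simpa using h1) (by simp [List.getLastD_concat])
      · by_cases hiw : i ∈ w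
        · obtain ⟨w₁, w₂, rfl⟩ := List.append_of_mem hiw
          rw [List.append_assoc, List.cons_append] at hw
          rw [wL_append P i (w₂ ++ [k]) w₁ i] at hw
          have h2 : 0 < wL P (i :: (w₂ ++ [k])) := by
            rcases ENNReal.mul_pos_iff.mp hw with ⟨_, h⟩
            exact h
          have hlen : (w₂ ++ [k]).length ≤ n := by
            simp only [List.length_append, List.length_cons, List.length_singleton] at ht ⊢
            omega
          exact ih (w₂ ++ [k]) hlen h2 (by simp [List.getLastD_concat])
        · exact ⟨w, hw, hiw, hkw⟩

lemma irreducible_pos_avoid {P : ℕ → ℕ → ℝ} (hP : ∀ a b, 0 ≤ P a b)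
    (hirr : MCIrreducible P) (i k : ℕ) (hik : i ≠ k) :
    ∃ w, 0 < wL P (i :: (w ++ [k])) ∧ i ∉ w ∧ k ∉ w := by
  obtain ⟨n, hn⟩ := hirr i k
  obtain ⟨t, htw, htl⟩ := exists_pos_word hP n i k hn
  exact exists_avoid_aux i k hik t.length t le_rfl htw htl

end AFT

namespace AFT

lemma getLastD_append_cons (c : ℕ) (v : List ℕ) :
    ∀ (u : List ℕ) (d : ℕ), (u ++ c :: v).getLastD d = v.getLastD c := by
  intro u
  induction u with
  | nil => intro d; rw [List.nil_append, getLastD_cons']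
  | cons a w ih => intro d; rw [List.cons_append, getLastD_cons', ih]

/-- summand of `A` -/
noncomputable def φ (P : ℕ → ℕ → ℝ) (g : ℕ → ℝ) (i j : ℕ) (t : List ℕ) : ℝ≥0∞ :=
  if j ∈ t then 0 else wL P (i :: t) * Gf g (t.getLastD i)

lemma A_eq (P g i j) : A P g i j = ∑' t : List ℕ, φ P g i j t := rfl

/-- first-entrance decomposition of `A` -/
lemma A_split (P : ℕ → ℕ → ℝ) (g : ℕ → ℝ) (i j ℓ : ℕ) (hjl : j ≠ ℓ) :
    A P g i j =
      (∑' t : List ℕ, if j ∈ t ∨ ℓ ∈ t then 0 else wL P (i :: t) * Gf g (t.getLastD i))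
      + (∑' t₁ : List ℕ, if j ∈ t₁ ∨ ℓ ∈ t₁ then 0 else wL P (i :: t₁ ++ [ℓ])) * A P g ℓ j := by
  rw [A_eq, tsum_split_first_occ ℓ (φ P g i j)]
  congr 1
  · refine tsum_congr (fun t => ?_)
    rw [φ]
    by_cases h1 : ℓ ∈ t
    · simp [h1]
    · by_cases h2 : j ∈ t <;> simp [h1, h2]
  · have key : ∀ p : List ℕ × List ℕ,
        (if ℓ ∈ p.1 then 0 else φ P g i j (p.1 ++ ℓ :: p.2)) =
        (if j ∈ p.1 ∨ ℓ ∈ p.1 then 0 else wL P (i :: p.1 ++ [ℓ])) * φ P g ℓ j p.2 := by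
      rintro ⟨t₁, t₂⟩
      simp only [φ]
      by_cases h1 : ℓ ∈ t₁
      · simp [h1]
      · by_cases h2 : j ∈ t₁
        · have : j ∈ t₁ ++ ℓ :: t₂ := List.mem_append_left _ h2
          simp [h1, h2, this]
        · by_cases h3 : j ∈ t₂
          · have : j ∈ t₁ ++ ℓ :: t₂ := List.mem_append_right _ (List.mem_cons_of_mem _ h3)
            simp [h1, h2, h3, this]
          · have hnot : j ∉ t₁ ++ ℓ :: t₂ := by
              simp only [List.mem_append, List.mem_cons, not_or]
              exact ⟨h2, fun h => hjl h, h3⟩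
            rw [if_neg h1, if_neg hnot, if_neg (by simp [h1, h2] : ¬ (j ∈ t₁ ∨ ℓ ∈ t₁)),
              if_neg h3]
            rw [List.cons_append, wL_append P ℓ t₂ t₁ i, getLastD_append_cons]
            simp only [← List.cons_append]
            ring
    rw [tsum_congr key]
    rw [ENNReal.tsum_prod
      (f := fun t₁ t₂ => (if j ∈ t₁ ∨ ℓ ∈ t₁ then 0 else wL P (i :: t₁ ++ [ℓ])) * φ P g ℓ j t₂)]
    simp_rw [ENNReal.tsum_mul_left]
    rw [ENNReal.tsum_mul_right]
    rfl

/-- count-restricted variant, for excursion recursion at the base state -/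
noncomputable def B (P : ℕ → ℕ → ℝ) (g : ℕ → ℝ) (j ℓ : ℕ) (n : ℕ) : ℝ≥0∞ :=
  ∑' t : List ℕ, if j ∈ t ∨ n < t.count ℓ then 0 else wL P (ℓ :: t) * Gf g (t.getLastD ℓ)

lemma B_succ_le (P : ℕ → ℕ → ℝ) (g : ℕ → ℝ) (j ℓ : ℕ) (hjl : j ≠ ℓ) (n : ℕ) :
    B P g j ℓ (n + 1) ≤
      (∑' t : List ℕ, if j ∈ t ∨ ℓ ∈ t then 0 else wL P (ℓ :: t) * Gf g (t.getLastD ℓ))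
      + (∑' t₁ : List ℕ, if j ∈ t₁ ∨ ℓ ∈ t₁ then 0 else wL P (ℓ :: t₁ ++ [ℓ])) * B P g j ℓ n := by
  rw [B, tsum_split_first_occ ℓ
    (fun t => if j ∈ t ∨ n + 1 < t.count ℓ then 0 else wL P (ℓ :: t) * Gf g (t.getLastD ℓ))]
  refine add_le_add (Summable.tsum_le_tsum (fun t => ?_) ENNReal.summable ENNReal.summable) ?_
  · by_cases h1 : ℓ ∈ t
    · simp [h1]
    · by_cases h2 : j ∈ t
      · simp [h1, h2]
      · have : t.count ℓ = 0 := List.count_eq_zero.mpr h1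
        simp [h1, h2, this]
  · rw [← ENNReal.tsum_mul_right]
    simp_rw [B, ← ENNReal.tsum_mul_left]
    rw [← ENNReal.tsum_prod
      (f := fun t₁ t₂ => (if j ∈ t₁ ∨ ℓ ∈ t₁ then 0 else wL P (ℓ :: t₁ ++ [ℓ])) *
        (if j ∈ t₂ ∨ n < t₂.count ℓ then 0 else wL P (ℓ :: t₂) * Gf g (t₂.getLastD ℓ)))]
    refine Summable.tsum_le_tsum (fun p => ?_) ENNReal.summable ENNReal.summable
    obtain ⟨t₁, t₂⟩ := p
    show (if ℓ ∈ t₁ then 0 else _) ≤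
      (if j ∈ t₁ ∨ ℓ ∈ t₁ then 0 else wL P (ℓ :: t₁ ++ [ℓ])) *
        (if j ∈ t₂ ∨ n < t₂.count ℓ then 0 else wL P (ℓ :: t₂) * Gf g (t₂.getLastD ℓ))
    by_cases h1 : ℓ ∈ t₁
    · simp [h1]
    · by_cases h2 : j ∈ t₁
      · have : j ∈ t₁ ++ ℓ :: t₂ := List.mem_append_left _ h2
        simp [h1, h2, this]
      · by_cases h3 : j ∈ t₂
        · have : j ∈ t₁ ++ ℓ :: t₂ := List.mem_append_right _ (List.mem_cons_of_mem _ h3)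
          simp [h1, h2, h3, this]
        · by_cases h4 : n < t₂.count ℓ
          · have hc : n + 1 < (t₁ ++ ℓ :: t₂).count ℓ := by
              rw [List.count_append, List.count_cons_self, List.count_eq_zero.mpr h1]
              omega
            rw [if_neg h1, if_pos (Or.inr hc)]
            exact zero_le
          · have hnot : ¬ (j ∈ t₁ ++ ℓ :: t₂ ∨ n + 1 < (t₁ ++ ℓ :: t₂).count ℓ) := by
              rw [List.count_append, List.count_cons_self, List.count_eq_zero.mpr h1]
              simp only [List.mem_append, List.mem_cons, not_or]
              constructor
              · exact ⟨h2, fun h => hjl h, h3⟩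
              · omega
            rw [if_neg h1, if_neg hnot, if_neg (by simp [h1, h2] : ¬ (j ∈ t₁ ∨ ℓ ∈ t₁)),
              if_neg (by simp [h3, h4] : ¬ (j ∈ t₂ ∨ n < t₂.count ℓ))]
            rw [List.cons_append, wL_append P ℓ t₂ t₁ ℓ, getLastD_append_cons]
            simp only [← List.cons_append]
            exact le_of_eq (by ring)

lemma B_zero_le (P : ℕ → ℕ → ℝ) (g : ℕ → ℝ) (j ℓ : ℕ) :
    B P g j ℓ 0 ≤
      ∑' t : List ℕ, if j ∈ t ∨ ℓ ∈ t then 0 else wL P (ℓ :: t) * Gf g (t.getLastD ℓ) := by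
  rw [B]
  refine Summable.tsum_le_tsum (fun t => ?_) ENNReal.summable ENNReal.summable
  by_cases h1 : ℓ ∈ t
  · have hc : 0 < t.count ℓ := List.count_pos_iff.mpr h1
    rw [if_pos (Or.inr hc), if_pos (Or.inr h1)]
  · have : t.count ℓ = 0 := List.count_eq_zero.mpr h1
    simp [h1, this]

end AFT

namespace AFT

lemma concat_not_prefix_concat {a b : ℕ} {x y : List ℕ} (hay : a ∉ y)
    (hne : x ++ [a] ≠ y ++ [b]) : ¬ (x ++ [a] <+: y ++ [b]) := by
  intro hpre
  have hlen : x.length + 1 ≤ y.length + 1 := by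
    have := hpre.length_le
    simpa using this
  rcases Nat.lt_or_ge x.length y.length with hlt | hge
  · have h1 : (x ++ [a])[x.length]'(by simp) = a := List.getElem_concat_length rfl _
    have h2 : (x ++ [a])[x.length]'(by simp) = (y ++ [b])[x.length]'(by simp; omega) :=
      hpre.getElem (by simp)
    have h3 : (y ++ [b])[x.length]'(by simp; omega) = y[x.length]'hlt :=
      List.getElem_append_left hlt
    exact hay (h1 ▸ (h2.trans h3) ▸ List.getElem_mem hlt)
  · have : x.length = y.length := by omega
    exact hne (hpre.eq_of_length (by simp [this]))

/-- first-passage weights sum to at most one -/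
lemma R_le_one {P : ℕ → ℕ → ℝ} {μ : ℕ → Measure (ℕ → ℕ)}
    (hP : ∀ a b, 0 ≤ P a b) (hchain : MCChainLaw P μ) (i j ℓ : ℕ) :
    (∑' t₁ : List ℕ, if j ∈ t₁ ∨ ℓ ∈ t₁ then 0 else wL P (i :: t₁ ++ [ℓ])) ≤ 1 := by
  classical
  set Q : List ℕ → Prop := fun u => ∃ t₁, u = t₁ ++ [ℓ] ∧ ¬ (j ∈ t₁ ∨ ℓ ∈ t₁) with hQ
  have key : (∑' t₁ : List ℕ, if j ∈ t₁ ∨ ℓ ∈ t₁ then 0 else wL P (i :: t₁ ++ [ℓ]))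
      = ∑' u : List ℕ, (if Q u then wL P (i :: u) else 0) := by
    rw [tsum_concat_reindex ℓ (fun u => if Q u then wL P (i :: u) else 0)
      (fun t ht => by
        by_cases h : Q t
        · exact h.elim (fun t₁ h₁ => ⟨t₁, h₁.1⟩)
        · simp [h] at ht)]
    refine tsum_congr (fun w => ?_)
    have : Q (w ++ [ℓ]) ↔ ¬ (j ∈ w ∨ ℓ ∈ w) := by
      constructor
      · rintro ⟨t₁, heq, hc⟩
        rw [show w = t₁ from List.append_cancel_right heq]
        exact hc
      · intro hc; exact ⟨w, rfl, hc⟩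
    by_cases h : j ∈ w ∨ ℓ ∈ w
    · rw [if_pos h, if_neg (fun hq => (this.mp hq) h)]
    · rw [if_neg h, if_pos (this.mpr h), List.cons_append]
  rw [key]
  refine prefixFree_sum_le_one hP hchain i Q ?_
  rintro u u' ⟨t₁, rfl, hc⟩ ⟨t₁', rfl, hc'⟩ hne
  push_neg at hc'
  exact concat_not_prefix_concat hc'.2 hne

/-- first-return weights avoiding `j`, plus one escape word, sum to at most one -/
lemma q_plus_delta_le_one {P : ℕ → ℕ → ℝ} {μ : ℕ → Measure (ℕ → ℕ)}
    (hP : ∀ a b, 0 ≤ P a b) (hchain : MCChainLaw P μ) (j ℓ : ℕ) (hjl : j ≠ ℓ)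
    (w0 : List ℕ) (hw0ℓ : ℓ ∉ w0) (hw0j : j ∉ w0) :
    (∑' t₁ : List ℕ, if j ∈ t₁ ∨ ℓ ∈ t₁ then 0 else wL P (ℓ :: t₁ ++ [ℓ]))
      + wL P (ℓ :: w0 ++ [j]) ≤ 1 := by
  classical
  set Q₁ : List ℕ → Prop := fun u => ∃ t₁, u = t₁ ++ [ℓ] ∧ ¬ (j ∈ t₁ ∨ ℓ ∈ t₁) with hQ₁
  set Q : List ℕ → Prop := fun u => Q₁ u ∨ u = w0 ++ [j] with hQdef
  have hw0nQ₁ : ¬ Q₁ (w0 ++ [j]) := by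
    rintro ⟨t₁, heq, hc⟩
    have : j = ℓ := by
      have h1 := List.getLastD_concat (a := 0) (b := j) (l := w0)
      rw [heq] at h1
      rw [List.getLastD_concat] at h1
      exact h1.symm
    exact hjl this
  have hsum : ∑' u : List ℕ, (if Q u then wL P (ℓ :: u) else 0)
      = (∑' u : List ℕ, if Q₁ u then wL P (ℓ :: u) else 0) + wL P (ℓ :: w0 ++ [j]) := by
    have hpt : ∀ u, (if Q u then wL P (ℓ :: u) else 0)
        = (if Q₁ u then wL P (ℓ :: u) else 0)
          + (if u = w0 ++ [j] then wL P (ℓ :: u) else 0) := by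
      intro u
      by_cases h1 : Q₁ u
      · have h2 : u ≠ w0 ++ [j] := fun hc => hw0nQ₁ (hc ▸ h1)
        rw [if_pos (Or.inl h1), if_pos h1, if_neg h2, add_zero]
      · by_cases h2 : u = w0 ++ [j]
        · subst h2
          rw [if_pos (Or.inr rfl), if_neg hw0nQ₁, if_pos rfl, zero_add]
        · have hnq : ¬ Q u := by
            rintro (h | h)
            · exact h1 h
            · exact h2 h
          rw [if_neg hnq, if_neg h1, if_neg h2, add_zero]
    rw [tsum_congr hpt, ENNReal.tsum_add]
    congr 1
    rw [tsum_eq_single (w0 ++ [j]) (fun u hu => if_neg hu)]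
    rw [if_pos rfl, List.cons_append]
  have hkey : (∑' t₁ : List ℕ, if j ∈ t₁ ∨ ℓ ∈ t₁ then 0 else wL P (ℓ :: t₁ ++ [ℓ]))
      = ∑' u : List ℕ, (if Q₁ u then wL P (ℓ :: u) else 0) := by
    rw [tsum_concat_reindex ℓ (fun u => if Q₁ u then wL P (ℓ :: u) else 0)
      (fun t ht => by
        by_cases h : Q₁ t
        · exact h.elim (fun t₁ h₁ => ⟨t₁, h₁.1⟩)
        · simp [h] at ht)]
    refine tsum_congr (fun w => ?_)
    have : Q₁ (w ++ [ℓ]) ↔ ¬ (j ∈ w ∨ ℓ ∈ w) := by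
      constructor
      · rintro ⟨t₁, heq, hc⟩
        rw [show w = t₁ from List.append_cancel_right heq]
        exact hc
      · intro hc; exact ⟨w, rfl, hc⟩
    by_cases h : j ∈ w ∨ ℓ ∈ w
    · rw [if_pos h, if_neg (fun hq => (this.mp hq) h)]
    · rw [if_neg h, if_pos (this.mpr h), List.cons_append]
  rw [hkey, ← hsum]
  refine prefixFree_sum_le_one hP hchain ℓ Q ?_
  rintro u u' (⟨t₁, rfl, hc⟩ | rfl) (⟨t₁', rfl, hc'⟩ | rfl) hne
  · push_neg at hc'
    exact concat_not_prefix_concat hc'.2 hne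
  · exact concat_not_prefix_concat hw0ℓ hne
  · push_neg at hc'
    exact concat_not_prefix_concat hc'.1 hne
  · exact absurd rfl hne

/-- domination: paths from `i` avoiding `ℓ`, prefixed by a path `ℓ → i`, appear in `A ℓ ℓ` -/
lemma A_dominate {P : ℕ → ℕ → ℝ} (g : ℕ → ℝ) (i ℓ : ℕ) (hiℓ : i ≠ ℓ)
    (w1 : List ℕ) (h1ℓ : ℓ ∉ w1) (h1i : i ∉ w1) :
    wL P (ℓ :: w1 ++ [i]) * A P g i ℓ ≤ A P g ℓ ℓ := by
  rw [A_eq, A_eq, ← ENNReal.tsum_mul_left]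
  have key : ∀ t : List ℕ,
      wL P (ℓ :: w1 ++ [i]) * φ P g i ℓ t = φ P g ℓ ℓ (w1 ++ i :: t) := by
    intro t
    simp only [φ]
    by_cases h : ℓ ∈ t
    · have : ℓ ∈ w1 ++ i :: t := List.mem_append_right _ (List.mem_cons_of_mem _ h)
      simp [h, this]
    · have hnot : ℓ ∉ w1 ++ i :: t := by
        simp only [List.mem_append, List.mem_cons, not_or]
        exact ⟨h1ℓ, fun hc => hiℓ hc.symm, h⟩
      rw [if_neg h, if_neg hnot]
      rw [wL_append P i t w1 ℓ, getLastD_append_cons]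
      ring
  rw [tsum_congr key]
  exact ENNReal.tsum_comp_le_tsum_of_injective
    (f := fun t : List ℕ => w1 ++ i :: t)
    (fun a b hab => List.cons_injective (List.append_cancel_left hab)) _

end AFT

namespace AFT

lemma main_fin {P : ℕ → ℕ → ℝ} {μ : ℕ → Measure (ℕ → ℕ)} {g : ℕ → ℝ} {ℓ : ℕ}
    (hP : ∀ a b, 0 ≤ P a b) (hchain : MCChainLaw P μ) (hirr : MCIrreducible P)
    (hA : A P g ℓ ℓ < ⊤) : ∀ i j, A P g i j < ⊤ := by
  -- Step 1 : from the base state to any taboo state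
  have step1 : ∀ j, A P g ℓ j < ⊤ := by
    intro j
    by_cases hjl : j = ℓ
    · exact hjl ▸ hA
    · obtain ⟨w0, hw0pos, hw0ℓ, hw0j⟩ := irreducible_pos_avoid hP hirr ℓ j (fun h => hjl h.symm)
      set δ : ℝ≥0∞ := wL P (ℓ :: w0 ++ [j]) with hδ
      have hδ0 : δ ≠ 0 := ne_of_gt hw0pos
      have hδtop : δ ≠ ⊤ := wL_ne_top P _
      set C : ℝ≥0∞ :=
        ∑' t : List ℕ, if j ∈ t ∨ ℓ ∈ t then 0 else wL P (ℓ :: t) * Gf g (t.getLastD ℓ) with hCdef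
      have hC : C ≤ A P g ℓ ℓ := by
        rw [hCdef, A_eq]
        refine Summable.tsum_le_tsum (fun t => ?_) ENNReal.summable ENNReal.summable
        rw [φ]
        by_cases h1 : ℓ ∈ t
        · rw [if_pos (Or.inr h1), if_pos h1]
        · by_cases h2 : j ∈ t
          · simp [h1, h2]
          · simp [h1, h2]
      set q : ℝ≥0∞ :=
        ∑' t₁ : List ℕ, if j ∈ t₁ ∨ ℓ ∈ t₁ then 0 else wL P (ℓ :: t₁ ++ [ℓ]) with hqdef
      have hq : q + δ ≤ 1 := q_plus_delta_le_one hP hchain j ℓ hjl w0 hw0ℓ hw0j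
      have hq' : q ≤ 1 - δ := ENNReal.le_sub_of_add_le_right hδtop hq
      have hδ1 : δ ≤ 1 := le_trans (le_add_self) hq
      set M : ℝ≥0∞ := A P g ℓ ℓ * δ⁻¹ with hMdef
      have hkey : M = A P g ℓ ℓ + (1 - δ) * M := by
        have h1 : δ + (1 - δ) = 1 := add_tsub_cancel_of_le hδ1
        calc M = A P g ℓ ℓ * (1 * δ⁻¹) := by rw [one_mul]
          _ = A P g ℓ ℓ * ((δ + (1 - δ)) * δ⁻¹) := by rw [h1]
          _ = A P g ℓ ℓ * (δ * δ⁻¹ + (1 - δ) * δ⁻¹) := by rw [add_mul]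
          _ = A P g ℓ ℓ * (1 + (1 - δ) * δ⁻¹) := by rw [ENNReal.mul_inv_cancel hδ0 hδtop]
          _ = A P g ℓ ℓ + (1 - δ) * M := by rw [hMdef]; ring
      have hB : ∀ n, B P g j ℓ n ≤ M := by
        intro n
        induction n with
        | zero =>
            calc B P g j ℓ 0 ≤ C := B_zero_le P g j ℓ
              _ ≤ A P g ℓ ℓ := hC
              _ ≤ A P g ℓ ℓ + (1 - δ) * M := le_add_right le_rfl
              _ = M := hkey.symm
        | succ n ih =>
            calc B P g j ℓ (n+1) ≤ C + q * B P g j ℓ n := B_succ_le P g j ℓ hjl n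
              _ ≤ A P g ℓ ℓ + (1 - δ) * M := add_le_add hC (mul_le_mul' hq' ih)
              _ = M := hkey.symm
      have hAM : A P g ℓ j ≤ M := by
        rw [A_eq, ENNReal.tsum_eq_iSup_sum]
        refine iSup_le (fun s => ?_)
        set n : ℕ := s.sup (fun t => t.count ℓ) with hn
        calc ∑ t ∈ s, φ P g ℓ j t
            ≤ ∑ t ∈ s, (if j ∈ t ∨ n < t.count ℓ then 0
                else wL P (ℓ :: t) * Gf g (t.getLastD ℓ)) := by
              refine Finset.sum_le_sum (fun t ht => ?_)
              rw [φ]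
              by_cases h2 : j ∈ t
              · simp [h2]
              · have : ¬ (j ∈ t ∨ n < t.count ℓ) := by
                  push_neg
                  exact ⟨h2, Finset.le_sup (f := fun t => t.count ℓ) ht⟩
                rw [if_neg h2, if_neg this]
          _ ≤ B P g j ℓ n := ENNReal.sum_le_tsum s
          _ ≤ M := hB n
      refine lt_of_le_of_lt hAM ?_
      exact ENNReal.mul_lt_top hA (ENNReal.inv_lt_top.mpr (pos_iff_ne_zero.mpr hδ0))
  -- Step 2 : from any state to the base taboo state
  have step2 : ∀ i, A P g i ℓ < ⊤ := by
    intro i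
    by_cases hiℓ : i = ℓ
    · exact hiℓ ▸ hA
    · obtain ⟨w1, hw1pos, hw1ℓ, hw1i⟩ := irreducible_pos_avoid hP hirr ℓ i (fun h => hiℓ h.symm)
      have hdom := A_dominate (P := P) g i ℓ hiℓ w1 hw1ℓ hw1i
      rw [List.cons_append] at hdom
      rw [lt_top_iff_ne_top]
      intro hcon
      rw [hcon, ENNReal.mul_top (ne_of_gt hw1pos)] at hdom
      exact (lt_of_le_of_lt hdom hA).ne rfl
  -- Step 3 : general
  intro i j
  by_cases hjl : j = ℓ
  · exact hjl ▸ step2 i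
  · rw [A_split P g i j ℓ hjl]
    refine ENNReal.add_lt_top.mpr ⟨?_, ?_⟩
    · refine lt_of_le_of_lt ?_ (step2 i)
      rw [A_eq]
      refine Summable.tsum_le_tsum (fun t => ?_) ENNReal.summable ENNReal.summable
      rw [φ]
      by_cases h1 : ℓ ∈ t
      · rw [if_pos (Or.inr h1), if_pos h1]
      · by_cases h2 : j ∈ t
        · simp [h1, h2]
        · simp [h1, h2]
    · refine lt_of_le_of_lt (mul_le_mul' (R_le_one hP hchain i j ℓ) le_rfl) ?_
      rw [one_mul]
      exact step1 j

end AFT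

namespace AFT

lemma tsum_concat_pair (f : List ℕ → ℝ≥0∞) (h0 : f [] = 0) :
    ∑' w : List ℕ, f w = ∑' p : List ℕ × ℕ, f (p.1 ++ [p.2]) := by
  refine (Function.Injective.tsum_eq (g := fun p : List ℕ × ℕ => p.1 ++ [p.2]) ?_ ?_).symm
  · rintro ⟨w, m⟩ ⟨w', m'⟩ h
    simp only at h
    obtain ⟨h1, h2⟩ := List.append_inj h (by
      have := congrArg List.length h
      simp only [List.length_append, List.length_cons, List.length_nil] at this
      omega)
    simp only [List.cons.injEq] at h2
    exact Prod.ext h1 h2.1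
  · intro t ht
    have htne : t ≠ [] := fun hc => ht (hc ▸ h0)
    exact ⟨⟨t.dropLast, t.getLast htne⟩, List.dropLast_append_getLast htne⟩

lemma tsum_grade_length (F : List ℕ → ℝ≥0∞) :
    ∑' w : List ℕ, F w = ∑' n : ℕ, ∑' w : List ℕ, (if w.length = n then F w else 0) := by
  rw [ENNReal.tsum_comm (f := fun n (w : List ℕ) => if w.length = n then F w else 0)]
  refine tsum_congr (fun w => ?_)
  rw [tsum_eq_single w.length (fun n hn => if_neg (fun hc => hn hc.symm))]
  rw [if_pos rfl]

section Invariant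

variable {P : ℕ → ℕ → ℝ} {π g : ℕ → ℝ}

/-- graded taboo weights out of `ℓ` -/
noncomputable def v (P : ℕ → ℕ → ℝ) (ℓ : ℕ) (n m : ℕ) : ℝ≥0∞ :=
  ∑' w : List ℕ, if w.length = n ∧ ℓ ∉ w ∧ m ≠ ℓ then wL P (ℓ :: (w ++ [m])) else 0

lemma v_zero (ℓ m : ℕ) : v P ℓ 0 m = if m ≠ ℓ then pE P ℓ m else 0 := by
  rw [v, tsum_eq_single [] (fun w hw => if_neg (fun hc => hw (List.length_eq_zero_iff.mp hc.1)))]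
  by_cases h : m ≠ ℓ
  · rw [if_pos (by simpa using h), if_pos h]
    simp [wL_cons_cons]
  · rw [if_neg (by simpa using h), if_neg h]

lemma v_ℓ (ℓ : ℕ) : ∀ n, v P ℓ n ℓ = 0 := by
  intro n
  rw [v]
  rw [tsum_congr (fun w => if_neg (fun hc => hc.2.2 rfl))]
  exact tsum_zero

lemma v_succ (ℓ : ℕ) (n m : ℕ) (hm : m ≠ ℓ) :
    v P ℓ (n+1) m = ∑' r : ℕ, v P ℓ n r * pE P r m := by
  rw [v]
  rw [tsum_concat_pair _ (by simp)]
  have key : ∀ p : List ℕ × ℕ,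
      (if (p.1 ++ [p.2]).length = n + 1 ∧ ℓ ∉ p.1 ++ [p.2] ∧ m ≠ ℓ
        then wL P (ℓ :: ((p.1 ++ [p.2]) ++ [m])) else 0)
      = (if p.1.length = n ∧ ℓ ∉ p.1 ∧ p.2 ≠ ℓ then wL P (ℓ :: (p.1 ++ [p.2])) else 0)
          * pE P p.2 m := by
    rintro ⟨w, r⟩
    simp only [List.length_append, List.length_cons, List.length_nil, List.mem_append,
      List.mem_cons, List.not_mem_nil, or_false, not_or]
    by_cases h1 : w.length = n
    · by_cases h2 : ℓ ∉ w
      · by_cases h3 : r ≠ ℓ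
        · rw [if_pos ⟨by omega, ⟨h2, fun hc => h3 hc.symm⟩, hm⟩, if_pos ⟨h1, h2, h3⟩]
          rw [wL_concat P (w ++ [r]) ℓ m, List.getLastD_concat]
        · rw [if_neg (fun hc => h3 (fun hc2 => hc.2.1.2 hc2.symm)), if_neg (fun hc => h3 hc.2.2),
            zero_mul]
      · rw [if_neg (fun hc => h2 hc.2.1.1), if_neg (fun hc => h2 hc.2.1), zero_mul]
    · rw [if_neg (fun hc => h1 (by omega)), if_neg (fun hc => h1 hc.1), zero_mul]
  rw [tsum_congr key]
  rw [ENNReal.tsum_prod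
    (f := fun w r => (if w.length = n ∧ ℓ ∉ w ∧ r ≠ ℓ then wL P (ℓ :: (w ++ [r])) else 0)
      * pE P r m)]
  rw [ENNReal.tsum_comm]
  refine tsum_congr (fun r => ?_)
  rw [v, ENNReal.tsum_mul_right]

lemma invariant_claim (hP : ∀ a b, 0 ≤ P a b) (hinv : MCInvariant P π) (ℓ : ℕ) :
    ∀ n m, ENNReal.ofReal (π ℓ) * (∑ q ∈ Finset.range (n+1), v P ℓ q m)
      ≤ ENNReal.ofReal (π m) := by
  have hπE : ∀ m, ENNReal.ofReal (π m)
      = ∑' r : ℕ, ENNReal.ofReal (π r) * pE P r m := by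
    intro m
    have h := (hinv.2.2 m)
    rw [← h.tsum_eq, ENNReal.ofReal_tsum_of_nonneg
      (fun r => mul_nonneg (hinv.1 r) (hP r m)) h.summable]
    exact tsum_congr (fun r => ENNReal.ofReal_mul (hinv.1 r))
  intro n
  induction n with
  | zero =>
      intro m
      rw [Finset.sum_range_one, v_zero]
      by_cases hm : m ≠ ℓ
      · rw [if_pos hm, hπE m]
        exact ENNReal.le_tsum ℓ
      · rw [if_neg hm, mul_zero]
        exact zero_le
  | succ n ih =>
      intro m
      by_cases hm : m ≠ ℓ
      · rw [Finset.sum_range_succ']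
        have hsum : ∑ q ∈ Finset.range (n+1), v P ℓ (q+1) m
            = ∑' r : ℕ, (∑ q ∈ Finset.range (n+1), v P ℓ q r) * pE P r m := by
          rw [Finset.sum_congr rfl (fun q _ => v_succ ℓ q m hm)]
          rw [← Summable.tsum_finsetSum (fun q _ => ENNReal.summable)]
          exact tsum_congr (fun r => by rw [← Finset.sum_mul])
        rw [hsum, mul_add, ← ENNReal.tsum_mul_left]
        have hterm : ∀ r : ℕ, ENNReal.ofReal (π ℓ) * ((∑ q ∈ Finset.range (n+1), v P ℓ q r) * pE P r m)
            ≤ (if r = ℓ then 0 else ENNReal.ofReal (π r) * pE P r m) := by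
          intro r
          by_cases hr : r = ℓ
          · subst hr
            rw [Finset.sum_congr rfl (fun q _ => v_ℓ r q), Finset.sum_const, smul_zero,
              zero_mul, mul_zero, if_pos rfl]
          · rw [if_neg hr, ← mul_assoc]
            exact mul_le_mul' (ih r) le_rfl
        calc (∑' r : ℕ, ENNReal.ofReal (π ℓ) * ((∑ q ∈ Finset.range (n+1), v P ℓ q r) * pE P r m))
              + ENNReal.ofReal (π ℓ) * v P ℓ 0 m
            ≤ (∑' r : ℕ, if r = ℓ then 0 else ENNReal.ofReal (π r) * pE P r m)
              + ENNReal.ofReal (π ℓ) * pE P ℓ m := by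
              refine add_le_add (Summable.tsum_le_tsum hterm ENNReal.summable ENNReal.summable) ?_
              rw [v_zero, if_pos hm]
          _ = ENNReal.ofReal (π m) := by
              have hpt2 : ∀ r : ℕ, ENNReal.ofReal (π r) * pE P r m
                  = (if r = ℓ then ENNReal.ofReal (π r) * pE P r m else 0)
                    + (if r = ℓ then 0 else ENNReal.ofReal (π r) * pE P r m) := by
                intro r; by_cases h : r = ℓ <;> simp [h]
              rw [hπE m, tsum_congr hpt2, ENNReal.tsum_add,
                tsum_eq_single ℓ (fun r hr => if_neg hr), if_pos rfl, add_comm]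
          _ ≤ ENNReal.ofReal (π m) := le_rfl
      · push_neg at hm
        subst hm
        rw [Finset.sum_congr rfl (fun q _ => v_ℓ m q), Finset.sum_const, smul_zero, mul_zero]
        exact zero_le

lemma invariant_A_lt_top (hP : ∀ a b, 0 ≤ P a b) (hinv : MCInvariant P π)
    (hgnn : ∀ m, 0 ≤ g m) (hsum : Summable (fun i => π i * g i)) :
    ∃ ℓ, A P g ℓ ℓ < ⊤ := by
  -- choose a state with positive invariant mass
  obtain ⟨ℓ, hℓ⟩ : ∃ ℓ, 0 < π ℓ := by
    by_contra hc
    push_neg at hc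
    have : ∀ i, π i = 0 := fun i => le_antisymm (hc i) (hinv.1 i)
    have h1 := hinv.2.1
    rw [show π = (fun _ => (0:ℝ)) from funext this] at h1
    simpa using h1.unique hasSum_zero
  refine ⟨ℓ, ?_⟩
  set πE : ℕ → ℝ≥0∞ := fun m => ENNReal.ofReal (π m) with hπE
  have hπ0 : πE ℓ ≠ 0 := by simp [hπE, ENNReal.ofReal_pos.mpr hℓ, pos_iff_ne_zero.mp]
  have hπtop : πE ℓ ≠ ⊤ := ENNReal.ofReal_ne_top
  -- decompose A ℓ ℓ
  have hdec : A P g ℓ ℓ ≤ Gf g ℓ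
      + ∑' m : ℕ, (∑' n : ℕ, v P ℓ n m) * Gf g m := by
    rw [A_eq]
    have hsplit0 : ∀ t : List ℕ, φ P g ℓ ℓ t
        = (if t = [] then φ P g ℓ ℓ t else 0) + (if t = [] then 0 else φ P g ℓ ℓ t) := by
      intro t; by_cases h : t = [] <;> simp [h]
    rw [tsum_congr hsplit0, ENNReal.tsum_add]
    refine add_le_add ?_ ?_
    · rw [tsum_eq_single ([] : List ℕ) (fun t ht => if_neg ht), if_pos rfl, φ]
      simp [Gf]
    refine le_trans (le_of_eq (tsum_concat_pair _ (by simp))) ?_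
    have key : ∀ p : List ℕ × ℕ,
        (if p.1 ++ [p.2] = [] then 0 else φ P g ℓ ℓ (p.1 ++ [p.2]))
        = ∑' n : ℕ, (if p.1.length = n ∧ ℓ ∉ p.1 ∧ p.2 ≠ ℓ
            then wL P (ℓ :: (p.1 ++ [p.2])) else 0) * Gf g p.2 := by
      rintro ⟨w, m⟩
      show (if w ++ [m] = [] then 0 else φ P g ℓ ℓ (w ++ [m]))
          = ∑' n : ℕ, (if w.length = n ∧ ℓ ∉ w ∧ m ≠ ℓ
              then wL P (ℓ :: (w ++ [m])) else 0) * Gf g m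
      rw [if_neg (by simp), φ]
      rw [tsum_eq_single w.length (fun n hn => by
        rw [if_neg (fun hc : w.length = n ∧ ℓ ∉ w ∧ m ≠ ℓ => hn hc.1.symm), zero_mul])]
      by_cases h2 : ℓ ∉ w
      · by_cases h3 : m ≠ ℓ
        · have hnot : ℓ ∉ w ++ [m] := by
            simp only [List.mem_append, List.mem_cons, List.not_mem_nil, or_false, not_or]
            exact ⟨h2, fun hc => h3 hc.symm⟩
          rw [if_neg hnot, if_pos ⟨rfl, h2, h3⟩, List.getLastD_concat]
        · push_neg at h3
          subst h3
          rw [if_pos (List.mem_append_right _ (List.mem_cons_self)),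
            if_neg (fun hc : w.length = w.length ∧ m ∉ w ∧ m ≠ m => hc.2.2 rfl), zero_mul]
      · push_neg at h2
        rw [if_pos (List.mem_append_left _ h2),
          if_neg (fun hc : w.length = w.length ∧ ℓ ∉ w ∧ m ≠ ℓ => hc.2.1 h2), zero_mul]
    refine le_trans (le_of_eq (tsum_congr key)) ?_
    refine le_trans (le_of_eq (ENNReal.tsum_prod
      (f := fun w m => ∑' n : ℕ, (if w.length = n ∧ ℓ ∉ w ∧ m ≠ ℓ
        then wL P (ℓ :: (w ++ [m])) else 0) * Gf g m))) ?_
    refine le_trans (le_of_eq ENNReal.tsum_comm) ?_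
    refine le_of_eq (tsum_congr (fun m => ?_))
    calc ∑' (w : List ℕ) (n : ℕ), (if w.length = n ∧ ℓ ∉ w ∧ m ≠ ℓ
            then wL P (ℓ :: (w ++ [m])) else 0) * Gf g m
        = ∑' (n : ℕ) (w : List ℕ), (if w.length = n ∧ ℓ ∉ w ∧ m ≠ ℓ
            then wL P (ℓ :: (w ++ [m])) else 0) * Gf g m := ENNReal.tsum_comm
      _ = ∑' n : ℕ, v P ℓ n m * Gf g m := tsum_congr (fun n => ENNReal.tsum_mul_right)
      _ = (∑' n : ℕ, v P ℓ n m) * Gf g m := ENNReal.tsum_mul_right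
  -- bound the excursion occupation by the invariant vector
  have hν : ∀ m, (∑' n : ℕ, v P ℓ n m) ≤ (πE ℓ)⁻¹ * πE m := by
    intro m
    have h1 : πE ℓ * (∑' n : ℕ, v P ℓ n m) ≤ πE m := by
      rw [← ENNReal.tsum_mul_left]
      refine ENNReal.tsum_le_of_sum_range_le (fun N => ?_)
      cases N with
      | zero => simp
      | succ n =>
          rw [← Finset.mul_sum]
          exact invariant_claim hP hinv ℓ n m
    calc (∑' n : ℕ, v P ℓ n m) = (πE ℓ)⁻¹ * (πE ℓ * (∑' n : ℕ, v P ℓ n m)) := by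
          rw [← mul_assoc, ENNReal.inv_mul_cancel hπ0 hπtop, one_mul]
      _ ≤ (πE ℓ)⁻¹ * πE m := mul_le_mul' le_rfl h1
  -- conclude
  have hfin : (∑' m : ℕ, πE m * Gf g m) < ⊤ := by
    have : ∀ m, πE m * Gf g m = ENNReal.ofReal (π m * g m) := by
      intro m
      rw [hπE, Gf, ← ENNReal.ofReal_mul (hinv.1 m)]
    rw [tsum_congr this, ← ENNReal.ofReal_tsum_of_nonneg
      (fun m => mul_nonneg (hinv.1 m) (hgnn m)) hsum]
    exact ENNReal.ofReal_lt_top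
  refine lt_of_le_of_lt hdec ?_
  refine ENNReal.add_lt_top.mpr ⟨ENNReal.ofReal_lt_top, ?_⟩
  calc ∑' m : ℕ, (∑' n : ℕ, v P ℓ n m) * Gf g m
      ≤ ∑' m : ℕ, (πE ℓ)⁻¹ * (πE m * Gf g m) := by
        refine Summable.tsum_le_tsum (fun m => ?_) ENNReal.summable ENNReal.summable
        rw [← mul_assoc]
        exact mul_le_mul' (hν m) le_rfl
    _ = (πE ℓ)⁻¹ * ∑' m : ℕ, πE m * Gf g m := ENNReal.tsum_mul_left
    _ < ⊤ := ENNReal.mul_lt_top (ENNReal.inv_lt_top.mpr (pos_iff_ne_zero.mpr hπ0)) hfin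

end Invariant

end AFT

/-- For an irreducible positive recurrent DTMC and a finite nonnegative
function `g` : if `E_ℓ[ζ_ℓ(g)] < ∞` for some state `ℓ`, then `E_i[ζ_j(g)] < ∞` for all
states `i, j`; in particular, if `π^T g < ∞` then `E_i[ζ_j(g)] < ∞` for all `i, j`. -/
theorem additive_functional_finiteness_transfer
    (P : ℕ → ℕ → ℝ) (μ : ℕ → Measure (ℕ → ℕ)) (π g : ℕ → ℝ)
    (hP : MCStochastic P) (hirr : MCIrreducible P) (hchain : MCChainLaw P μ)
    (hrec : MCPositiveRecurrent μ) (hinv : MCInvariant P π)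
    (hgnn : ∀ i, 0 ≤ g i) :
    ((∃ ℓ, (∫⁻ ω, ENNReal.ofReal (addF g ℓ ω) ∂ μ ℓ) < ⊤) →
      ∀ i j, (∫⁻ ω, ENNReal.ofReal (addF g j ω) ∂ μ i) < ⊤) ∧
    (Summable (fun i => π i * g i) →
      ∀ i j, (∫⁻ ω, ENNReal.ofReal (addF g j ω) ∂ μ i) < ⊤) := by
  have hP0 : ∀ a b, 0 ≤ P a b := hP.1
  have hret : ∀ i j, μ i {ω | ∃ k, 1 ≤ k ∧ ω k = j} = 1 := fun i j => (hrec i j).1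
  constructor
  · rintro ⟨ℓ, hℓ⟩ i j
    rw [AFT.intA hP0 hchain hret hgnn ℓ ℓ] at hℓ
    rw [AFT.intA hP0 hchain hret hgnn i j]
    exact AFT.main_fin hP0 hchain hirr hℓ i j
  · intro hsum i j
    obtain ⟨ℓ, hℓ⟩ := AFT.invariant_A_lt_top hP0 hinv hgnn hsum
    rw [AFT.intA hP0 hchain hret hgnn i j]
    exact AFT.main_fin hP0 hchain hirr hℓ i j
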